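/- Let a ≠ 0, T ≥ 1, and suppose |a| ≥ c₁e^{−T} and |a| ≤ c₂e^{T}, with t ∈ [0,1] and s ∈ [−T, T+1]. Then the function φ(t,s) = arcosh((a² + e^{2t} + e^{2s})/(2e^{t+s})) satisfies e^{−CT} ≤ |∂²φ/∂s∂t(t,s)| ≤ e^{CT} for a constant C depending only on c₁, c₂ (not on T, a, t, s). -/

import Mathlib

/-- Inverse hyperbolic cosine: `arcosh x = log (x + √(x² − 1))`. -/
noncomputable def arcosh (x : ℝ) : ℝ := Real.log (x + Real.sqrt (x ^ 2 - 1))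

/-- Hyperbolic distance between `(0, eᵗ)` and `(a, eˢ)` in the half-plane model. -/
noncomputable def phiPar (a t s : ℝ) : ℝ :=
  arcosh ((a ^ 2 + Real.exp (2 * t) + Real.exp (2 * s)) / (2 * Real.exp (t + s)))

lemma hasDerivAt_arcosh {x : ℝ} (hx : 1 < x) :
    HasDerivAt arcosh (1 / Real.sqrt (x ^ 2 - 1)) x := by
  have h1 : (0:ℝ) < x ^ 2 - 1 := by nlinarith
  have hs : 0 < Real.sqrt (x ^ 2 - 1) := Real.sqrt_pos.2 h1
  have hsq : HasDerivAt (fun y : ℝ => Real.sqrt (y ^ 2 - 1))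
      (1 / (2 * Real.sqrt (x ^ 2 - 1)) * (2 * x)) x := by
    have hinner : HasDerivAt (fun y : ℝ => y ^ 2 - 1) (2 * x) x := by
      simpa using ((hasDerivAt_pow 2 x).sub_const 1)
    exact (Real.hasDerivAt_sqrt (ne_of_gt h1)).comp x hinner
  have hadd : HasDerivAt (fun y : ℝ => y + Real.sqrt (y ^ 2 - 1))
      (1 + 1 / (2 * Real.sqrt (x ^ 2 - 1)) * (2 * x)) x := (hasDerivAt_id x).add hsq
  have hpos : 0 < x + Real.sqrt (x ^ 2 - 1) := by positivity
  have hlog := (Real.hasDerivAt_log (ne_of_gt hpos)).comp x hadd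
  have h : HasDerivAt arcosh
      ((x + Real.sqrt (x ^ 2 - 1))⁻¹ * (1 + 1 / (2 * Real.sqrt (x ^ 2 - 1)) * (2 * x))) x := hlog
  convert h using 1
  have h2 : Real.sqrt (x ^ 2 - 1) ^ 2 = x ^ 2 - 1 := Real.sq_sqrt h1.le
  field_simp
  nlinarith [h2, hs, hpos]

noncomputable def Dd (a t s : ℝ) : ℝ :=
  (a ^ 2 + Real.exp (2 * t) + Real.exp (2 * s)) ^ 2
    - 4 * Real.exp (2 * t) * Real.exp (2 * s)

lemma Dd_ge (a t s : ℝ) : a ^ 4 ≤ Dd a t s := by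
  unfold Dd
  nlinarith [sq_nonneg (Real.exp (2*t) - Real.exp (2*s)), sq_nonneg a,
    (Real.exp_pos (2*t)).le, (Real.exp_pos (2*s)).le, sq_nonneg (a^2)]

lemma Dd_pos {a : ℝ} (ha : a ≠ 0) (t s : ℝ) : 0 < Dd a t s :=
  lt_of_lt_of_le (by positivity) (Dd_ge a t s)

lemma u_gt_one {a : ℝ} (ha : a ≠ 0) (t s : ℝ) :
    1 < (a ^ 2 + Real.exp (2 * t) + Real.exp (2 * s)) / (2 * Real.exp (t + s)) := by
  rw [lt_div_iff₀ (by positivity)]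
  have h1 : Real.exp (t + s) = Real.exp t * Real.exp s := Real.exp_add t s
  have h2 : Real.exp (2 * t) = Real.exp t ^ 2 := by
    rw [← Real.exp_nat_mul]; ring_nf
  have h3 : Real.exp (2 * s) = Real.exp s ^ 2 := by
    rw [← Real.exp_nat_mul]; ring_nf
  nlinarith [sq_nonneg (Real.exp t - Real.exp s), pow_pos (abs_pos.2 ha) 2, sq_abs a]

lemma hasDerivAt_phi_t {a : ℝ} (ha : a ≠ 0) (t s : ℝ) :
    HasDerivAt (fun t' => phiPar a t' s)
      ((Real.exp (2 * t) - a ^ 2 - Real.exp (2 * s)) / Real.sqrt (Dd a t s)) t := by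
  set P := Real.exp (2 * t) with hP
  set Q := Real.exp (2 * s) with hQ
  set E := Real.exp (t + s) with hE
  have hEpos : 0 < E := Real.exp_pos _
  have hE2 : E ^ 2 = P * Q := by
    rw [hE, hP, hQ, sq, ← Real.exp_add, ← Real.exp_add]; ring_nf
  have hN : HasDerivAt (fun t' => a ^ 2 + Real.exp (2 * t') + Real.exp (2 * s))
      (P * 2) t := by
    have h1 : HasDerivAt (fun t' : ℝ => Real.exp (2 * t')) (P * 2) t := by
      simpa [hP] using ((hasDerivAt_id t).const_mul 2).exp
    exact (h1.const_add (a ^ 2)).add_const Q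
  have hDen : HasDerivAt (fun t' => 2 * Real.exp (t' + s)) (2 * E) t := by
    have h1 : HasDerivAt (fun t' : ℝ => Real.exp (t' + s)) (E * 1) t := by
      simpa [hE] using ((hasDerivAt_id t).add_const s).exp
    simpa using h1.const_mul 2
  have hu := hN.div hDen (by positivity)
  have hgt := u_gt_one ha t s
  have harc := (hasDerivAt_arcosh hgt).comp t hu
  have hphi : (fun t' => phiPar a t' s) =
      arcosh ∘ (fun t' => (a ^ 2 + Real.exp (2 * t') + Real.exp (2 * s)) / (2 * Real.exp (t' + s))) := rfl
  rw [hphi]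
  refine harc.congr_deriv ?_
  symm
  set N := a ^ 2 + P + Q with hNdef
  have hD0 : 0 < Dd a t s := Dd_pos ha t s
  have hsD : 0 < Real.sqrt (Dd a t s) := Real.sqrt_pos.2 hD0
  have hu2 : (N / (2 * E)) ^ 2 - 1 = Dd a t s / (2 * E) ^ 2 := by
    rw [div_pow, div_sub_one (by positivity)]
    congr 1
    unfold Dd
    rw [← hP, ← hQ, ← hNdef]
    nlinarith [hE2]
  have hsq : Real.sqrt ((N / (2 * E)) ^ 2 - 1) = Real.sqrt (Dd a t s) / (2 * E) := by
    rw [hu2, Real.sqrt_div hD0.le, Real.sqrt_sq (by positivity)]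
  rw [hsq]
  field_simp
  ring

lemma hasDerivAt_phi_ts {a : ℝ} (ha : a ≠ 0) (t s : ℝ) :
    HasDerivAt (fun s' => (Real.exp (2 * t) - a ^ 2 - Real.exp (2 * s')) / Real.sqrt (Dd a t s'))
      (-(8 * Real.exp (2 * t) * Real.exp (2 * s) * a ^ 2)
        / (Dd a t s * Real.sqrt (Dd a t s))) s := by
  set P := Real.exp (2 * t) with hP
  set Q := Real.exp (2 * s) with hQ
  have hQ1 : HasDerivAt (fun s' : ℝ => Real.exp (2 * s')) (Q * 2) s := by
    simpa [hQ] using ((hasDerivAt_id s).const_mul 2).exp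
  have hn : HasDerivAt (fun s' => P - a ^ 2 - Real.exp (2 * s')) (-(Q * 2)) s :=
    (hQ1.const_sub (P - a ^ 2)).congr_deriv (by ring) |>.congr_of_eventuallyEq
      (Filter.Eventually.of_forall fun x => by ring)
  have hD : HasDerivAt (fun s' => Dd a t s')
      (2 * (a ^ 2 + P + Q) ^ 1 * (Q * 2) - 4 * P * (Q * 2)) s := by
    have hS : HasDerivAt (fun s' : ℝ => a ^ 2 + P + Real.exp (2 * s')) (Q * 2) s :=
      hQ1.const_add (a ^ 2 + P)
    exact (hS.pow 2).sub (hQ1.const_mul (4 * P))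
  have hD0 : 0 < Dd a t s := Dd_pos ha t s
  have hr : 0 < Real.sqrt (Dd a t s) := Real.sqrt_pos.2 hD0
  have hg : HasDerivAt (fun s' => Real.sqrt (Dd a t s'))
      (1 / (2 * Real.sqrt (Dd a t s)) * (2 * (a ^ 2 + P + Q) ^ 1 * (Q * 2) - 4 * P * (Q * 2))) s :=
    (Real.hasDerivAt_sqrt hD0.ne').comp s hD
  have hdiv := hn.div hg hr.ne'
  refine hdiv.congr_deriv ?_
  symm
  have hr2 : Real.sqrt (Dd a t s) ^ 2 = (a ^ 2 + P + Q) ^ 2 - 4 * P * Q := Real.sq_sqrt hD0.le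
  have hDr : Dd a t s = Real.sqrt (Dd a t s) ^ 2 := (Real.sq_sqrt hD0.le).symm
  rw [hDr]
  set r := Real.sqrt (Dd a t s)
  have hQ' : Real.exp (s * 2) = Q := by rw [hQ]; ring_nf
  field_simp
  rw [Real.sqrt_sq hr.le]
  linear_combination (2 * Q * r ^ 2) * hr2

set_option maxHeartbeats 2000000 in
theorem stmt19 (c₁ c₂ : ℝ) (hc₁ : 0 < c₁) (hc₂ : 0 < c₂) :
    ∃ C > (0 : ℝ), ∀ a T t s : ℝ, a ≠ 0 → 1 ≤ T →
      c₁ * Real.exp (-T) ≤ |a| → |a| ≤ c₂ * Real.exp T →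
      t ∈ Set.Icc (0 : ℝ) 1 → s ∈ Set.Icc (-T) (T + 1) →
      Real.exp (-(C * T)) ≤ |deriv (fun s' => deriv (fun t' => phiPar a t' s') t) s| ∧
      |deriv (fun s' => deriv (fun t' => phiPar a t' s') t) s| ≤ Real.exp (C * T) := by
  set K : ℝ := c₂ ^ 2 + 2 * Real.exp 2 with hK
  have hKpos : 0 < K := by positivity
  set m : ℝ := 8 * c₁ ^ 2 / K ^ 3 with hm
  set M : ℝ := 8 * Real.exp 4 * c₂ ^ 2 / c₁ ^ 6 with hM
  have hmpos : 0 < m := by positivity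
  have hMpos : 0 < M := by positivity
  refine ⟨10 + |Real.log m| + |Real.log M|, by positivity, ?_⟩
  set C : ℝ := 10 + |Real.log m| + |Real.log M| with hC
  intro a T t s ha hT halo hahi ht hs
  obtain ⟨ht0, ht1⟩ := ht
  obtain ⟨hs0, hs1⟩ := hs
  set P := Real.exp (2 * t) with hP
  set Q := Real.exp (2 * s) with hQ
  have hfun : (fun s' => deriv (fun t' => phiPar a t' s') t) =
      fun s' => (Real.exp (2 * t) - a ^ 2 - Real.exp (2 * s')) / Real.sqrt (Dd a t s') :=
    funext fun s' => (hasDerivAt_phi_t ha t s').deriv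
  rw [hfun, (hasDerivAt_phi_ts ha t s).deriv]
  have hD0 : 0 < Dd a t s := Dd_pos ha t s
  have hr : 0 < Real.sqrt (Dd a t s) := Real.sqrt_pos.2 hD0
  have ha2 : 0 < a ^ 2 := by positivity
  have habs : |(-(8 * P * Q * a ^ 2) / (Dd a t s * Real.sqrt (Dd a t s)))|
      = 8 * P * Q * a ^ 2 / (Dd a t s * Real.sqrt (Dd a t s)) := by
    rw [abs_div, abs_neg, abs_of_pos (by positivity), abs_of_pos (mul_pos hD0 hr)]
  rw [habs]
  -- exponent identities
  have hexp2 : ∀ x : ℝ, Real.exp x ^ 2 = Real.exp (2 * x) := fun x => by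
    rw [← Real.exp_nat_mul]; norm_num
  have hexp3 : ∀ x : ℝ, Real.exp x ^ 3 = Real.exp (3 * x) := fun x => by
    rw [← Real.exp_nat_mul]; norm_num
  -- basic range facts
  have hT0 : (0:ℝ) < T := lt_of_lt_of_le one_pos hT
  have hP1 : 1 ≤ P := Real.one_le_exp (by linarith)
  have hPe : P ≤ Real.exp 2 := Real.exp_le_exp.2 (by linarith)
  have hQlo : Real.exp (-(2 * T)) ≤ Q := Real.exp_le_exp.2 (by linarith)
  have hQhi : Q ≤ Real.exp 2 * Real.exp (2 * T) := by
    rw [← Real.exp_add]; exact Real.exp_le_exp.2 (by linarith)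
  have hXlo : c₁ ^ 2 * Real.exp (-(2 * T)) ≤ a ^ 2 := by
    have h := mul_le_mul halo halo (by positivity) (abs_nonneg a)
    have he : Real.exp (-T) * Real.exp (-T) = Real.exp (-(2 * T)) := by
      rw [← Real.exp_add]; ring_nf
    nlinarith [sq_abs a]
  have hXhi : a ^ 2 ≤ c₂ ^ 2 * Real.exp (2 * T) := by
    have h := mul_le_mul hahi hahi (abs_nonneg a) (by positivity)
    have he : Real.exp T * Real.exp T = Real.exp (2 * T) := by
      rw [← Real.exp_add]; ring_nf
    nlinarith [sq_abs a]
  have hE1 : (1:ℝ) ≤ Real.exp (2 * T) := Real.one_le_exp (by linarith)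
  -- bounds on Dd and sqrt Dd
  have hS : a ^ 2 + P + Q ≤ K * Real.exp (2 * T) := by
    have h1 : P ≤ Real.exp 2 * Real.exp (2 * T) := by
      have h := mul_le_mul_of_nonneg_left hE1 (Real.exp_pos 2).le
      exact le_trans hPe (by simpa using h)
    have hK' : K * Real.exp (2 * T) = c₂ ^ 2 * Real.exp (2 * T)
        + Real.exp 2 * Real.exp (2 * T) + Real.exp 2 * Real.exp (2 * T) := by rw [hK]; ring
    rw [hK']
    exact add_le_add (add_le_add hXhi h1) hQhi
  have hDhi : Dd a t s ≤ (K * Real.exp (2 * T)) ^ 2 := by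
    have : Dd a t s ≤ (a ^ 2 + P + Q) ^ 2 := by
      unfold Dd; rw [← hP, ← hQ]
      nlinarith [Real.exp_pos (2*t), Real.exp_pos (2*s)]
    refine le_trans this (pow_le_pow_left₀ (by positivity) hS 2)
  have hrhi : Real.sqrt (Dd a t s) ≤ K * Real.exp (2 * T) := by
    calc Real.sqrt (Dd a t s) ≤ Real.sqrt ((K * Real.exp (2 * T)) ^ 2) :=
          Real.sqrt_le_sqrt hDhi
      _ = K * Real.exp (2 * T) := Real.sqrt_sq (by positivity)
  have hrlo : a ^ 2 ≤ Real.sqrt (Dd a t s) := by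
    calc a ^ 2 = Real.sqrt ((a ^ 2) ^ 2) := (Real.sqrt_sq (by positivity)).symm
      _ ≤ Real.sqrt (Dd a t s) := Real.sqrt_le_sqrt (by nlinarith [Dd_ge a t s])
  have hDlo : (a ^ 2) ^ 2 ≤ Dd a t s := by nlinarith [Dd_ge a t s]
  have hDenhi : Dd a t s * Real.sqrt (Dd a t s) ≤ K ^ 3 * Real.exp (6 * T) := by
    have := mul_le_mul hDhi hrhi hr.le (by positivity)
    calc Dd a t s * Real.sqrt (Dd a t s) ≤ (K * Real.exp (2*T)) ^ 2 * (K * Real.exp (2*T)) := this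
      _ = K ^ 3 * Real.exp (2 * T) ^ 3 := by ring
      _ = K ^ 3 * Real.exp (6 * T) := by rw [hexp3]; ring_nf
  have hDenlo : c₁ ^ 6 * Real.exp (-(6 * T)) ≤ Dd a t s * Real.sqrt (Dd a t s) := by
    have h1 : (a ^ 2) ^ 2 * a ^ 2 ≤ Dd a t s * Real.sqrt (Dd a t s) :=
      mul_le_mul hDlo hrlo ha2.le hD0.le
    have h2 : (c₁ ^ 2 * Real.exp (-(2 * T))) ^ 3 ≤ (a ^ 2) ^ 3 :=
      pow_le_pow_left₀ (by positivity) hXlo 3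
    have h3 : (c₁ ^ 2 * Real.exp (-(2 * T))) ^ 3 = c₁ ^ 6 * Real.exp (-(6 * T)) := by
      rw [mul_pow, hexp3]; ring_nf
    nlinarith
  have hCT10 : Real.exp (-((C - 10) * T)) ≤ m ∧ M ≤ Real.exp ((C - 10) * T) := by
    constructor
    · rw [← Real.exp_log hmpos]
      apply Real.exp_le_exp.2
      nlinarith [neg_abs_le (Real.log m), abs_nonneg (Real.log m), abs_nonneg (Real.log M)]
    · rw [← Real.exp_log hMpos]
      apply Real.exp_le_exp.2
      nlinarith [le_abs_self (Real.log M), abs_nonneg (Real.log m), abs_nonneg (Real.log M)]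
  constructor
  · -- lower bound
    have step1 : Real.exp (-(C * T)) ≤ m * Real.exp (-(10 * T)) := by
      have : Real.exp (-(C * T)) = Real.exp (-((C - 10) * T)) * Real.exp (-(10 * T)) := by
        rw [← Real.exp_add]; ring_nf
      rw [this]
      exact mul_le_mul_of_nonneg_right hCT10.1 (Real.exp_pos _).le
    have step2 : m * Real.exp (-(10 * T)) ≤
        (8 * c₁ ^ 2 * Real.exp (-(4 * T))) / (K ^ 3 * Real.exp (6 * T)) := by
      rw [hm, div_mul_eq_mul_div, div_le_div_iff₀ (by positivity) (by positivity)]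
      have he : Real.exp (-(10 * T)) * Real.exp (6 * T) = Real.exp (-(4 * T)) := by
        rw [← Real.exp_add]; ring_nf
      linear_combination (8 * c₁ ^ 2 * K ^ 3) * he
    have step3 : (8 * c₁ ^ 2 * Real.exp (-(4 * T))) / (K ^ 3 * Real.exp (6 * T)) ≤
        8 * P * Q * a ^ 2 / (Dd a t s * Real.sqrt (Dd a t s)) := by
      apply div_le_div₀ (by positivity) ?_ (mul_pos hD0 hr) hDenhi
      have he : Real.exp (-(2 * T)) * Real.exp (-(2 * T)) = Real.exp (-(4 * T)) := by
        rw [← Real.exp_add]; ring_nf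
      have h1 : Real.exp (-(2 * T)) * (c₁ ^ 2 * Real.exp (-(2 * T))) ≤ Q * a ^ 2 :=
        mul_le_mul hQlo hXlo (by positivity) (Real.exp_pos _).le
      have h2 : c₁ ^ 2 * Real.exp (-(4 * T)) ≤ Q * a ^ 2 := by
        calc c₁ ^ 2 * Real.exp (-(4 * T))
            = Real.exp (-(2 * T)) * (c₁ ^ 2 * Real.exp (-(2 * T))) := by rw [← he]; ring
          _ ≤ Q * a ^ 2 := h1
      have h3 : c₁ ^ 2 * Real.exp (-(4 * T)) * 1 ≤ Q * a ^ 2 * P :=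
        mul_le_mul h2 hP1 zero_le_one (by positivity)
      nlinarith [h3]
    linarith
  · -- upper bound
    have step1 : 8 * P * Q * a ^ 2 / (Dd a t s * Real.sqrt (Dd a t s)) ≤
        (8 * Real.exp 4 * c₂ ^ 2 * Real.exp (4 * T)) / (c₁ ^ 6 * Real.exp (-(6 * T))) := by
      apply div_le_div₀ (by positivity) ?_ (by positivity) hDenlo
      have he1 : Real.exp 2 * Real.exp 2 = Real.exp 4 := by
        rw [← Real.exp_add]; norm_num
      have he2 : Real.exp (2 * T) * Real.exp (2 * T) = Real.exp (4 * T) := by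
        rw [← Real.exp_add]; ring_nf
      have h1 : Q * a ^ 2 ≤ Real.exp 2 * Real.exp (2 * T) * (c₂ ^ 2 * Real.exp (2 * T)) :=
        mul_le_mul hQhi hXhi (by positivity) (by positivity)
      have h2 : P * (Q * a ^ 2)
          ≤ Real.exp 2 * (Real.exp 2 * Real.exp (2 * T) * (c₂ ^ 2 * Real.exp (2 * T))) :=
        mul_le_mul hPe h1 (by positivity) (Real.exp_pos 2).le
      have h3 : Real.exp 2 * (Real.exp 2 * Real.exp (2 * T) * (c₂ ^ 2 * Real.exp (2 * T)))
          = Real.exp 4 * c₂ ^ 2 * Real.exp (4 * T) := by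
        rw [← he1, ← he2]; ring
      nlinarith [h2]
    have step2 : (8 * Real.exp 4 * c₂ ^ 2 * Real.exp (4 * T)) / (c₁ ^ 6 * Real.exp (-(6 * T)))
        = M * Real.exp (10 * T) := by
      rw [hM]
      have he : Real.exp (4 * T) = Real.exp (10 * T) * Real.exp (-(6 * T)) := by
        rw [← Real.exp_add]; ring_nf
      field_simp
      rw [he]; ring
    have step3 : M * Real.exp (10 * T) ≤ Real.exp (C * T) := by
      have : Real.exp (C * T) = Real.exp ((C - 10) * T) * Real.exp (10 * T) := by
        rw [← Real.exp_add]; ring_nf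
      rw [this]
      exact mul_le_mul_of_nonneg_right hCT10.2 (Real.exp_pos _).le
    calc 8 * P * Q * a ^ 2 / (Dd a t s * Real.sqrt (Dd a t s)) ≤ _ := step1
      _ = M * Real.exp (10 * T) := step2
      _ ≤ Real.exp (C * T) := step3
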